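/- If C ⊆ ℝⁿ is a nonempty pointed closed convex set (i.e., its recession cone contains no line, equivalently the recession cone is pointed), then the barrier cone B_C = {a ∈ ℝⁿ : sup_{x∈C} ⟨a,x⟩ < ∞} has nonempty interior. -/

import Mathlib

open RealInnerProductSpace

noncomputable def supp {n : ℕ} (C : Set (EuclideanSpace ℝ (Fin n)))
    (a : EuclideanSpace ℝ (Fin n)) : EReal :=
  ⨆ x ∈ C, ((⟪a, x⟫ : ℝ) : EReal)

def barrierCone {n : ℕ} (C : Set (EuclideanSpace ℝ (Fin n))) :
    Set (EuclideanSpace ℝ (Fin n)) :=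
  {a | supp C a < ⊤}

def recCone {n : ℕ} (C : Set (EuclideanSpace ℝ (Fin n))) :
    Set (EuclideanSpace ℝ (Fin n)) :=
  {d | ∀ x ∈ C, ∀ t : ℝ, 0 ≤ t → x + t • d ∈ C}

section Aux

variable {n : ℕ} {C : Set (EuclideanSpace ℝ (Fin n))}

lemma recCone_zero_mem : (0 : EuclideanSpace ℝ (Fin n)) ∈ recCone C := by
  intro x hx t ht; simpa using hx

lemma recCone_smul_mem {c : ℝ} (hc : 0 ≤ c) {d : EuclideanSpace ℝ (Fin n)}
    (hd : d ∈ recCone C) : c • d ∈ recCone C := by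
  intro x hx t ht
  have := hd x hx (t * c) (mul_nonneg ht hc)
  simpa [smul_smul] using this

lemma recCone_add_mem {d₁ d₂ : EuclideanSpace ℝ (Fin n)}
    (h₁ : d₁ ∈ recCone C) (h₂ : d₂ ∈ recCone C) : d₁ + d₂ ∈ recCone C := by
  intro x hx t ht
  have h := h₂ _ (h₁ x hx t ht) t ht
  simpa [smul_add, add_assoc] using h

lemma recCone_isClosed (hcl : IsClosed C) : IsClosed (recCone C) := by
  have h : recCone C = ⋂ x ∈ C, ⋂ t : ℝ, ⋂ _ : 0 ≤ t,
      (fun d : EuclideanSpace ℝ (Fin n) => x + t • d) ⁻¹' C := by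
    ext d
    simp [recCone, Set.mem_iInter]
  rw [h]
  refine isClosed_biInter fun x hx => isClosed_iInter fun t => isClosed_iInter fun ht => ?_
  exact hcl.preimage (continuous_const.add (continuous_id.const_smul t))

lemma mem_recCone_of_tendsto (hcl : IsClosed C) (hconv : Convex ℝ C)
    (x : ℕ → EuclideanSpace ℝ (Fin n)) (hx : ∀ k, x k ∈ C)
    (hnorm : Filter.Tendsto (fun k => ‖x k‖) Filter.atTop Filter.atTop)
    (d : EuclideanSpace ℝ (Fin n))
    (hd : Filter.Tendsto (fun k => ‖x k‖⁻¹ • x k) Filter.atTop (nhds d)) :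
    d ∈ recCone C := by
  intro z hz t ht
  set r : ℕ → ℝ := fun k => ‖x k‖⁻¹ with hr
  have hr0 : Filter.Tendsto r Filter.atTop (nhds 0) := hnorm.inv_tendsto_atTop
  -- the points y k = z + (t * r k) • (x k - z) are in C eventually and tend to z + t • d
  have hy : Filter.Tendsto (fun k => z + (t * r k) • (x k - z)) Filter.atTop
      (nhds (z + t • d)) := by
    have h1 : Filter.Tendsto (fun k => t • (r k • x k)) Filter.atTop (nhds (t • d)) :=
      hd.const_smul t
    have h2 : Filter.Tendsto (fun k => (t * r k) • z) Filter.atTop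
        (nhds ((0 : ℝ) • z)) := by
      have : Filter.Tendsto (fun k => t * r k) Filter.atTop (nhds (t * 0)) :=
        hr0.const_mul t
      simpa using this.smul_const z
    have h3 : Filter.Tendsto (fun k => z + t • (r k • x k) - (t * r k) • z)
        Filter.atTop (nhds (z + t • d - (0 : ℝ) • z)) :=
      (tendsto_const_nhds.add h1).sub h2
    have heq : ∀ k, z + (t * r k) • (x k - z) = z + t • (r k • x k) - (t * r k) • z := by
      intro k
      simp only [smul_sub, smul_smul]
      abel
    rw [show z + t • d = z + t • d - (0 : ℝ) • z by simp]
    simpa [heq] using h3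
  refine hcl.mem_of_tendsto hy ?_
  have hev : ∀ᶠ k in Filter.atTop, max t 1 ≤ ‖x k‖ := hnorm.eventually_ge_atTop _
  filter_upwards [hev] with k hk
  have hxk : (0 : ℝ) < ‖x k‖ := lt_of_lt_of_le (lt_of_lt_of_le one_pos (le_max_right t 1)) hk
  set s : ℝ := t * r k with hs
  have hs0 : 0 ≤ s := mul_nonneg ht (inv_nonneg.mpr hxk.le)
  have hs1 : s ≤ 1 := by
    rw [hs, hr]
    rw [← div_eq_mul_inv]
    exact div_le_one_of_le₀ (le_trans (le_max_left t 1) hk) hxk.le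
  have hmem := hconv hz (hx k) (by linarith : (0:ℝ) ≤ 1 - s) hs0 (by ring)
  have : (1 - s) • z + s • x k = z + s • (x k - z) := by
    simp only [smul_sub, sub_smul, one_smul]
    abel
  rw [this] at hmem
  exact hmem

lemma exists_sep (hne : C.Nonempty) (hcl : IsClosed C) (hconv : Convex ℝ C)
    (hpt : recCone C ∩ (-recCone C) = {0}) :
    ∃ (a : EuclideanSpace ℝ (Fin n)) (ε : ℝ), 0 < ε ∧
      ∀ d ∈ recCone C, ‖d‖ = 1 → ⟪a, d⟫ ≤ -ε := by
  classical
  -- recCone C as a convex cone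
  set K : ConvexCone ℝ (EuclideanSpace ℝ (Fin n)) :=
    { carrier := recCone C
      smul_mem' := fun c hc d hd => recCone_smul_mem hc.le hd
      add_mem' := fun d₁ h₁ d₂ h₂ => recCone_add_mem h₁ h₂ } with hK
  have hKset : (K : Set (EuclideanSpace ℝ (Fin n))) = recCone C := rfl
  set P : ProperCone ℝ (EuclideanSpace ℝ (Fin n)) := ProperCone.innerDual (recCone C) with hP
  have hP0 : (0 : EuclideanSpace ℝ (Fin n)) ∈ (P : Set (EuclideanSpace ℝ (Fin n))) := by
    rw [hP, SetLike.mem_coe, ProperCone.mem_innerDual]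
    intro x hx; simp
  have hPconv : Convex ℝ (P : Set (EuclideanSpace ℝ (Fin n))) := P.convex
  -- interior of P is nonempty
  have hint : (interior (P : Set (EuclideanSpace ℝ (Fin n)))).Nonempty := by
    by_contra hemp
    have haff : affineSpan ℝ (P : Set (EuclideanSpace ℝ (Fin n))) ≠ ⊤ := by
      intro htop
      exact hemp ((hPconv.interior_nonempty_iff_affineSpan_eq_top).mpr htop)
    have hvs : vectorSpan ℝ (P : Set (EuclideanSpace ℝ (Fin n))) ≠ ⊤ := by
      intro htop
      exact haff ((AffineSubspace.affineSpan_eq_top_iff_vectorSpan_eq_top_of_nonempty ℝ (EuclideanSpace ℝ (Fin n)) (EuclideanSpace ℝ (Fin n)) ⟨0, hP0⟩).mpr htop)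
    have hsp : Submodule.span ℝ (P : Set (EuclideanSpace ℝ (Fin n))) ≠ ⊤ := by
      intro htop
      apply hvs
      have hle : Submodule.span ℝ (P : Set (EuclideanSpace ℝ (Fin n))) ≤ vectorSpan ℝ (P : Set (EuclideanSpace ℝ (Fin n))) := by
        rw [Submodule.span_le]
        intro y hy
        have := vsub_mem_vectorSpan ℝ hy hP0
        simpa using this
      exact top_le_iff.mp (htop ▸ hle)
    have hob : (Submodule.span ℝ (P : Set (EuclideanSpace ℝ (Fin n))))ᗮ ≠ ⊥ :=
      fun hb => hsp (Submodule.orthogonal_eq_bot_iff.mp hb)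
    obtain ⟨u, humem, hu0⟩ := Submodule.exists_mem_ne_zero_of_ne_bot hob
    have hortho : ∀ y ∈ (P : Set (EuclideanSpace ℝ (Fin n))), ⟪y, u⟫ = 0 := fun y hy =>
      (Submodule.mem_orthogonal _ u).mp humem y (Submodule.subset_span hy)
    -- bipolar
    set K' : ProperCone ℝ (EuclideanSpace ℝ (Fin n)) :=
      ⟨{ carrier := recCone C
         add_mem' := fun h₁ h₂ => recCone_add_mem h₁ h₂
         zero_mem' := recCone_zero_mem
         smul_mem' := fun c d hd => recCone_smul_mem c.2 hd }, recCone_isClosed hcl⟩ with hK'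
    have hbip := ProperCone.innerDual_innerDual K'
    have hmemdual : ∀ v : EuclideanSpace ℝ (Fin n), (∀ y ∈ (P : Set (EuclideanSpace ℝ (Fin n))), (0:ℝ) ≤ ⟪y, v⟫) → v ∈ recCone C := by
      intro v hv
      have : v ∈ ProperCone.innerDual (ProperCone.innerDual (K' : Set (EuclideanSpace ℝ (Fin n))) : Set (EuclideanSpace ℝ (Fin n))) := by
        rw [ProperCone.mem_innerDual]
        intro y hy
        exact hv y hy
      rw [hbip] at this
      exact this
    have hu1 : u ∈ recCone C := hmemdual u fun y hy => le_of_eq (hortho y hy).symm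
    have hu2 : -u ∈ recCone C := hmemdual (-u) fun y hy => by
      rw [inner_neg_right, hortho y hy, neg_zero]
    have : u ∈ recCone C ∩ (-recCone C) := ⟨hu1, by simpa [Set.mem_neg] using hu2⟩
    rw [hpt] at this
    exact hu0 this
  obtain ⟨b, hb⟩ := hint
  obtain ⟨ε, hε, hball⟩ := Metric.isOpen_iff.mp isOpen_interior b hb
  refine ⟨-b, ε / 2, by positivity, ?_⟩
  intro d hd hd1
  have hmem : b - (ε / 2) • d ∈ (P : Set (EuclideanSpace ℝ (Fin n))) := by
    apply interior_subset
    apply hball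
    rw [Metric.mem_ball, dist_eq_norm]
    have : b - (ε / 2) • d - b = -((ε / 2) • d) := by abel
    rw [this, norm_neg, norm_smul, hd1, mul_one, Real.norm_eq_abs,
      abs_of_pos (by positivity : (0:ℝ) < ε / 2)]
    linarith
  have h0 : (0:ℝ) ≤ ⟪d, b - (ε / 2) • d⟫ := by
    rw [SetLike.mem_coe, ProperCone.mem_innerDual] at hmem
    exact hmem hd
  have hdd : ⟪d, d⟫ = (1:ℝ) := by
    rw [real_inner_self_eq_norm_sq, hd1]; norm_num
  rw [inner_sub_right, inner_smul_right, hdd, mul_one] at h0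
  have hge : ⟪d, b⟫ ≥ ε / 2 := by linarith
  have hcomm := real_inner_comm b d
  rw [inner_neg_left]
  linarith

end Aux

theorem stmt0 {n : ℕ} (C : Set (EuclideanSpace ℝ (Fin n)))
    (hne : C.Nonempty) (hcl : IsClosed C) (hconv : Convex ℝ C)
    (hpt : recCone C ∩ (-recCone C) = {0}) :
    (interior (barrierCone C)).Nonempty := by
  classical
  obtain ⟨a, ε, hε, hsep⟩ := exists_sep hne hcl hconv hpt
  refine ⟨a, ?_⟩
  rw [mem_interior]
  refine ⟨Metric.ball a (ε / 2), ?_, Metric.isOpen_ball, Metric.mem_ball_self (by positivity)⟩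
  intro a' ha'
  show supp C a' < ⊤
  have hbound : ∃ M : ℝ, ∀ x ∈ C, ⟪a', x⟫ ≤ M := by
    by_contra hno
    push_neg at hno
    choose f hfC hflt using hno
    set g : ℕ → EuclideanSpace ℝ (Fin n) := fun k => f ((k : ℝ) + 1) with hg
    have hgC : ∀ k, g k ∈ C := fun k => hfC _
    have hglt : ∀ k : ℕ, (k : ℝ) + 1 < ⟪a', g k⟫ := fun k => hflt _
    have ha'0 : a' ≠ 0 := by
      intro h
      have := hglt 0
      rw [h] at this
      simp at this
      linarith
    have hna' : (0:ℝ) < ‖a'‖ := norm_pos_iff.mpr ha'0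
    have hnormge : ∀ k : ℕ, ((k : ℝ) + 1) / ‖a'‖ ≤ ‖g k‖ := by
      intro k
      have h1 : ((k : ℝ) + 1) ≤ ‖a'‖ * ‖g k‖ :=
        le_trans (hglt k).le (real_inner_le_norm a' (g k))
      rw [div_le_iff₀ hna']
      linarith [h1]
    have hnorm : Filter.Tendsto (fun k => ‖g k‖) Filter.atTop Filter.atTop := by
      refine Filter.tendsto_atTop_mono hnormge ?_
      apply Filter.Tendsto.atTop_div_const hna'
      exact Filter.tendsto_atTop_add_const_right _ 1 tendsto_natCast_atTop_atTop
    have hgpos : ∀ k : ℕ, (0:ℝ) < ‖g k‖ := by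
      intro k
      have := hnormge k
      have : (0:ℝ) < ((k:ℝ)+1) / ‖a'‖ := by positivity
      linarith [hnormge k]
    set u : ℕ → EuclideanSpace ℝ (Fin n) := fun k => ‖g k‖⁻¹ • g k with hu
    have husph : ∀ k, u k ∈ Metric.sphere (0 : EuclideanSpace ℝ (Fin n)) 1 := by
      intro k
      rw [Metric.mem_sphere, dist_zero_right, hu]
      rw [norm_smul, norm_inv, norm_norm]
      exact inv_mul_cancel₀ (hgpos k).ne'
    obtain ⟨d, hdsph, φ, hφ, hφtend⟩ :=
      (isCompact_sphere (0 : EuclideanSpace ℝ (Fin n)) 1).tendsto_subseq husph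
    have hd1 : ‖d‖ = 1 := by
      rw [Metric.mem_sphere, dist_zero_right] at hdsph
      exact hdsph
    have hdrec : d ∈ recCone C :=
      mem_recCone_of_tendsto hcl hconv (fun k => g (φ k)) (fun k => hgC _)
        (hnorm.comp hφ.tendsto_atTop) d hφtend
    -- ⟪a', d⟫ ≥ 0
    have hnn : (0:ℝ) ≤ ⟪a', d⟫ := by
      have htd : Filter.Tendsto (fun k => ⟪a', u (φ k)⟫) Filter.atTop (nhds ⟪a', d⟫) :=
        Filter.Tendsto.inner tendsto_const_nhds hφtend
      refine ge_of_tendsto' htd ?_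
      intro k
      rw [hu]
      rw [real_inner_smul_right]
      have h1 : (0:ℝ) < ⟪a', g (φ k)⟫ := lt_trans (by positivity) (hglt (φ k))
      positivity
    -- but ⟪a', d⟫ < 0
    have hlt : ⟪a', d⟫ < 0 := by
      have h1 : ⟪a, d⟫ ≤ -ε := hsep d hdrec hd1
      have h2 : ⟪a' - a, d⟫ ≤ ‖a' - a‖ * ‖d‖ := real_inner_le_norm _ _
      have h3 : ‖a' - a‖ < ε / 2 := by
        rw [Metric.mem_ball, dist_eq_norm] at ha'
        exact ha'
      have h4 : ⟪a', d⟫ = ⟪a, d⟫ + ⟪a' - a, d⟫ := by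
        rw [inner_sub_left]; ring
      rw [h4, hd1] at *
      nlinarith
    linarith
  obtain ⟨M, hM⟩ := hbound
  have : supp C a' ≤ (M : EReal) := by
    refine iSup₂_le fun x hx => ?_
    exact_mod_cast hM x hx
  exact lt_of_le_of_lt this (EReal.coe_lt_top M)
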